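/- Let B be a small category, F : B ⥤ Cat a functor with small values, E a cocomplete category, and X : Grothendieck F ⥤ E a functor. Then for every object b of B, the value at b of the left Kan extension of X along the projection forget : Grothendieck F ⥤ B is naturally isomorphic to the colimit of the restriction of X to the fiber over b, i.e. (Lan_{forget F} X)(b) ≅ colim (ι F b ⋙ X). (Left Kan extensions along Grothendieck opfibrations are computed fiberwise.) -/

import Mathlib

open CategoryTheory CategoryTheory.Limits

universe u v w

section Aux

lemma eqToHom_comp_map_eqToHom {C D : Type*} [Category C] [Category D] (G : C ⥤ D) {x y : C}
    {z : D} (p : z = G.obj x) (q : x = y) :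
    eqToHom p ≫ G.map (eqToHom q) = eqToHom (p.trans (congrArg G.obj q)) := by
  subst q; simp

variable {B : Type u} [SmallCategory B] (F : B ⥤ Cat.{u, u}) (b : B)

/-- The structure morphism of `d`, typed with source `d.left.base`. -/
def grothHom (d : CostructuredArrow (Grothendieck.forget F) b) : d.left.base ⟶ b := d.hom

lemma grothAux_map_eq {d₁ d₂ : CostructuredArrow (Grothendieck.forget F) b} (g : d₁ ⟶ d₂) :
    F.map (grothHom F b d₁) = F.map g.left.base ≫ F.map (grothHom F b d₂) := by
  show F.map d₁.hom = _
  rw [← CostructuredArrow.w g]; exact F.map_comp _ _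

/-- The inclusion of the fiber over `b` into the costructured arrow category. -/
@[simps]
def grothFiberIncl : F.obj b ⥤ CostructuredArrow (Grothendieck.forget F) b where
  obj x := CostructuredArrow.mk (Y := (Grothendieck.ι F b).obj x) (𝟙 b)
  map f := CostructuredArrow.homMk ((Grothendieck.ι F b).map f) (by exact Category.id_comp _)
  map_id x := by apply CostructuredArrow.hom_ext; exact (Grothendieck.ι F b).map_id x
  map_comp f g := by
    apply CostructuredArrow.hom_ext; exact (Grothendieck.ι F b).map_comp f g

/-- The reflection onto the fiber, using cocartesian lifts. -/
@[simps]
def grothFiberRefl : CostructuredArrow (Grothendieck.forget F) b ⥤ F.obj b where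
  obj d := (F.map (grothHom F b d)).toFunctor.obj d.left.fiber
  map {d₁ d₂} g :=
    eqToHom (Functor.congr_obj (congrArg Cat.Hom.toFunctor (grothAux_map_eq F b g)) d₁.left.fiber) ≫
      (F.map (grothHom F b d₂)).toFunctor.map g.left.fiber
  map_id d := by
    exact (eqToHom_comp_map_eqToHom _ _ (by simp)).trans (eqToHom_refl _ _)
  map_comp {d₁ d₂ d₃} g h := by
    have eq : (g ≫ h).left.fiber =
        eqToHom (by erw [Functor.map_comp, Functor.comp_obj]) ≫
          (F.map h.left.base).toFunctor.map g.left.fiber ≫ h.left.fiber :=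
      Grothendieck.comp_fiber g.left h.left
    rw [eq, Functor.congr_hom (congrArg Cat.Hom.toFunctor (grothAux_map_eq F b h)) g.left.fiber]
    simp
    erw [eqToHom_map]
    exact eqToHom_trans_assoc _ _ _
end Aux

/-- Conjugating by the identity of `F.obj b`. -/
lemma grothCatMapId {X : Cat.{u, u}} (G : X ⟶ X) (hG : G = 𝟙 X) {a c : X} (u : a ⟶ c)
    (p : a = G.toFunctor.obj a) (q : G.toFunctor.obj c = c) :
    eqToHom p ≫ G.toFunctor.map u ≫ eqToHom q = u := by
  subst hG; simp

lemma grothCatMapId2 {X : Cat.{u, u}} (G : X ⟶ X) (hG : G = 𝟙 X) {a a' c : X} (w : a ⟶ c)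
    (r : a = a') (p : a' = G.toFunctor.obj a) (q : G.toFunctor.obj c = c) :
    eqToHom r ≫ eqToHom p ≫ G.toFunctor.map w ≫ eqToHom q = w := by
  subst hG; subst r; simp

lemma grothCatMapId3 {X : Cat.{u, u}} (G : X ⟶ X) (hG : G = 𝟙 X) {a a' c e : X} (u : a' ⟶ c)
    (f : c ⟶ e) (r : a = a') (r' : a = G.toFunctor.obj a') (s : G.toFunctor.obj c = c) :
    eqToHom r ≫ u ≫ f = eqToHom r' ≫ G.toFunctor.map u ≫ eqToHom s ≫ f := by
  subst hG; subst r; simp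

/-- The hom-set equivalence exhibiting the fiber inclusion as a right adjoint. -/
noncomputable def grothFiberEquiv {B : Type u} [SmallCategory B] (F : B ⥤ Cat.{u, u}) (b : B)
    (d : CostructuredArrow (Grothendieck.forget F) b) (x : F.obj b) :
    ((grothFiberRefl F b).obj d ⟶ x) ≃ (d ⟶ (grothFiberIncl F b).obj x) :=
  { toFun := fun u => CostructuredArrow.homMk
      (⟨grothHom F b d, u⟩ : d.left ⟶ (Grothendieck.ι F b).obj x) (by exact Category.comp_id _)
    invFun := fun v =>
      eqToHom (Functor.congr_obj (congrArg Cat.Hom.toFunctor (grothAux_map_eq F b v)) d.left.fiber) ≫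
        (F.map (𝟙 b)).toFunctor.map v.left.fiber ≫
          eqToHom (by exact Functor.congr_obj (congrArg Cat.Hom.toFunctor (F.map_id b)) _)
    left_inv := fun u => grothCatMapId _ (F.map_id b) u _ _
    right_inv := fun v => by
      apply CostructuredArrow.hom_ext
      apply Grothendieck.ext
      · exact grothCatMapId2 _ (F.map_id b) v.left.fiber _ _ _
      · have := CostructuredArrow.w v
        exact this.symm.trans (Category.comp_id _) }

lemma grothFiberEquiv_nat {B : Type u} [SmallCategory B] (F : B ⥤ Cat.{u, u}) (b : B)
    (d : CostructuredArrow (Grothendieck.forget F) b) (x₁ x₂ : F.obj b) (f : x₁ ⟶ x₂)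
    (u : (grothFiberRefl F b).obj d ⟶ x₁) :
    grothFiberEquiv F b d x₂ (u ≫ f) = grothFiberEquiv F b d x₁ u ≫ (grothFiberIncl F b).map f := by
  apply CostructuredArrow.hom_ext
  apply Grothendieck.ext
  · exact grothCatMapId3 _ (F.map_id b) u f _ _ _
  · exact (Category.comp_id _).symm

/-- The adjunction exhibiting the fiber inclusion as a right adjoint. -/
noncomputable def grothFiberAdj {B : Type u} [SmallCategory B] (F : B ⥤ Cat.{u, u}) (b : B) :
    Adjunction.leftAdjointOfEquiv (grothFiberEquiv F b) (grothFiberEquiv_nat F b) ⊣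
      grothFiberIncl F b :=
  Adjunction.adjunctionOfEquivLeft _ _

instance grothFiberIncl_final {B : Type u} [SmallCategory B] (F : B ⥤ Cat.{u, u}) (b : B) :
    (grothFiberIncl F b).Final :=
  Functor.final_of_adjunction (grothFiberAdj F b)

/-- **Left Kan extensions along Grothendieck opfibrations are computed fiberwise.**
For `F : B ⥤ Cat` with small values, a cocomplete category `E` and
`X : Grothendieck F ⥤ E`, the value at `b : B` of the left Kan extension of `X` along
the projection `forget : Grothendieck F ⥤ B` is isomorphic to the colimit of the
restriction of `X` to the fiber over `b`. -/
theorem lan_grothendieck_forget_obj_iso_colimit_fiber {B : Type u} [SmallCategory B]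
    (F : B ⥤ Cat.{u, u}) {E : Type v} [Category.{w} E] [HasColimitsOfSize.{u, u} E]
    (X : Grothendieck F ⥤ E) (b : B) :
    Nonempty (((Grothendieck.forget F).lan.obj X).obj b ≅
      colimit (Grothendieck.ι F b ⋙ X)) := by
  refine ⟨((Grothendieck.forget F).leftKanExtensionObjIsoColimit X b).trans ?_⟩
  refine (Functor.Final.colimitIso (grothFiberIncl F b)
    (CostructuredArrow.proj (Grothendieck.forget F) b ⋙ X)).symm.trans ?_
  exact HasColimit.isoOfNatIso (Iso.refl _)
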